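/- Let Q be a solution to the (n,2)-queens problem (a non-attacking set of n queens on the (n,2)-board), let 1 ≤ k < n, and suppose the corner subsquare {n−k+1,…,n}² contains exactly p queens of Q. Then the restriction Q ∩ {1,…,n−k}² is a non-attacking set of exactly n − 2k + p queens on the (n−k,2)-board. -/
import Mathlib


/-- A point `q` lies on the `(n,d)`-board, i.e. all coordinates are in `{1,…,n}`. -/
def onBoard (n d : ℕ) (q : Fin d → ℕ) : Prop :=
  ∀ i, 1 ≤ q i ∧ q i ≤ n

/-- Queen `a` attacks queen `b`: there are an integer `m` and a nonzero vector
`ε ∈ {-1,0,1}^d` with `a i = ε i * m + b i` for all `i`. -/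
def attacks {d : ℕ} (a b : Fin d → ℕ) : Prop :=
  ∃ (m : ℤ) (ε : Fin d → ℤ), (∀ i, ε i = -1 ∨ ε i = 0 ∨ ε i = 1) ∧ ε ≠ 0 ∧
    ∀ i, (a i : ℤ) = ε i * m + (b i : ℤ)

/-- A set of queens is non-attacking if no two distinct members attack each other. -/
def nonAttacking {d : ℕ} (Q : Finset (Fin d → ℕ)) : Prop :=
  ∀ a ∈ Q, ∀ b ∈ Q, a ≠ b → ¬ attacks a b

/-- A partial solution on the `(n,d)`-board: a non-attacking set fitting the board. -/
def isPartial (n d : ℕ) (Q : Finset (Fin d → ℕ)) : Prop :=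
  (∀ q ∈ Q, onBoard n d q) ∧ nonAttacking Q

/-- A solution to the `(n,d)`-queens problem: a non-attacking set of `n^(d-1)` queens. -/
def isSolution (n d : ℕ) (Q : Finset (Fin d → ℕ)) : Prop :=
  isPartial n d Q ∧ Q.card = n ^ (d - 1)

/-- The `(n,d)`-board as a finite set. -/
def boardFinset (n d : ℕ) : Finset (Fin d → ℕ) :=
  Fintype.piFinset fun _ => Finset.Icc 1 n

/-- `Qmax n d` : the maximum cardinality of a non-attacking set on the `(n,d)`-board. -/
noncomputable def Qmax (n d : ℕ) : ℕ :=
  sSup {k | ∃ Q : Finset (Fin d → ℕ), isPartial n d Q ∧ Q.card = k}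

lemma attacks_of_eq_zero {a b : Fin 2 → ℕ} (h : a 0 = b 0) : attacks a b := by
  refine ⟨(a 1 : ℤ) - b 1, ![0, 1], ?_, ?_, ?_⟩
  · intro i; fin_cases i <;> simp
  · intro hc; have := congrFun hc 1; simp at this
  · intro i; fin_cases i <;> simp [h]

lemma attacks_of_eq_one {a b : Fin 2 → ℕ} (h : a 1 = b 1) : attacks a b := by
  refine ⟨(a 0 : ℤ) - b 0, ![1, 0], ?_, ?_, ?_⟩
  · intro i; fin_cases i <;> simp
  · intro hc; have := congrFun hc 0; simp at this
  · intro i; fin_cases i <;> simp [h]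

lemma coord_injOn {Q : Finset (Fin 2 → ℕ)} (hQ : nonAttacking Q) (j : Fin 2) :
    Set.InjOn (fun q => q j) (↑Q : Set (Fin 2 → ℕ)) := by
  intro a ha b hb hab
  by_contra hne
  apply hQ a ha b hb hne
  fin_cases j
  · exact attacks_of_eq_zero hab
  · exact attacks_of_eq_one hab

lemma image_coord {n : ℕ} {Q : Finset (Fin 2 → ℕ)} (hpart : isPartial n 2 Q)
    (hcard : Q.card = n) (j : Fin 2) :
    Q.image (fun q => q j) = Finset.Icc 1 n := by
  apply Finset.eq_of_subset_of_card_le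
  · intro x hx
    rw [Finset.mem_image] at hx
    obtain ⟨q, hq, rfl⟩ := hx
    exact Finset.mem_Icc.mpr (hpart.1 q hq j)
  · rw [Finset.card_image_of_injOn (coord_injOn hpart.2 j), hcard, Nat.card_Icc]
    omega

lemma filter_coord_card {n : ℕ} {Q : Finset (Fin 2 → ℕ)} (hpart : isPartial n 2 Q)
    (hcard : Q.card = n) (j : Fin 2) (P : ℕ → Prop) [DecidablePred P] :
    (Q.filter (fun q => P (q j))).card = ((Finset.Icc 1 n).filter P).card := by
  rw [← image_coord hpart hcard j, Finset.filter_image,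
    Finset.card_image_of_injOn ((coord_injOn hpart.2 j).mono (Finset.filter_subset _ _))]

/-- Subsquare heuristic in 2D: if `Q` solves the `(n,2)`-queens problem, `1 ≤ k < n`,
and the corner subsquare `{n-k+1,…,n}²` contains exactly `p` queens of `Q`, then
`Q ∩ {1,…,n-k}²` is a non-attacking set of exactly `n - 2k + p` queens on the
`(n-k,2)`-board. -/
theorem subsquare_heuristic_2d (n k p : ℕ) (hk1 : 1 ≤ k) (hkn : k < n)
    (Q : Finset (Fin 2 → ℕ)) (hQ : isSolution n 2 Q)
    (hp : (Q.filter (fun q => ∀ i, n - k + 1 ≤ q i)).card = p) :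
    isPartial (n - k) 2 (Q.filter (fun q => ∀ i, q i ≤ n - k)) ∧
    ((Q.filter (fun q => ∀ i, q i ≤ n - k)).card : ℤ) =
      (n : ℤ) - 2 * k + p := by
  obtain ⟨hpart, hcard⟩ := hQ
  have hcard' : Q.card = n := by simpa using hcard
  constructor
  · constructor
    · intro q hq i
      rw [Finset.mem_filter] at hq
      exact ⟨(hpart.1 q hq.1 i).1, hq.2 i⟩
    · intro a ha b hb
      exact hpart.2 a (Finset.mem_filter.mp ha).1 b (Finset.mem_filter.mp hb).1
  · -- counting
    have h0 : (Q.filter (fun q => q 0 ≤ n - k)).card = n - k := by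
      clear hp
      have he : (Finset.Icc 1 n).filter (fun x => x ≤ n - k) = Finset.Icc 1 (n - k) := by
        ext x; simp only [Finset.mem_filter, Finset.mem_Icc]; omega
      rw [filter_coord_card hpart hcard' 0 (fun x => x ≤ n - k), he, Nat.card_Icc]
      omega
    have h1 : (Q.filter (fun q => n - k + 1 ≤ q 1)).card = k := by
      clear hp h0
      have he : (Finset.Icc 1 n).filter (fun x => n - k + 1 ≤ x)
          = Finset.Icc (n - k + 1) n := by
        ext x; simp only [Finset.mem_filter, Finset.mem_Icc]; omega
      rw [filter_coord_card hpart hcard' 1 (fun x => n - k + 1 ≤ x), he, Nat.card_Icc]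
      omega
    have split0 : (Q.filter (fun q => q 0 ≤ n - k ∧ q 1 ≤ n - k)).card
        + (Q.filter (fun q => q 0 ≤ n - k ∧ n - k + 1 ≤ q 1)).card
        = (Q.filter (fun q => q 0 ≤ n - k)).card := by
      clear hp h0 h1
      have e1 : Q.filter (fun q => q 0 ≤ n - k ∧ q 1 ≤ n - k)
          = (Q.filter (fun q => q 0 ≤ n - k)).filter (fun q => q 1 ≤ n - k) := by
        rw [Finset.filter_filter]
      have e2 : Q.filter (fun q => q 0 ≤ n - k ∧ n - k + 1 ≤ q 1)
          = (Q.filter (fun q => q 0 ≤ n - k)).filter (fun q => ¬ q 1 ≤ n - k) := by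
        rw [Finset.filter_filter]
        apply Finset.filter_congr
        intro q _
        omega
      rw [e1, e2]
      exact Finset.card_filter_add_card_filter_not (fun q : Fin 2 → ℕ => q 1 ≤ n - k)
    have split1 : (Q.filter (fun q => n - k + 1 ≤ q 1 ∧ n - k + 1 ≤ q 0)).card
        + (Q.filter (fun q => n - k + 1 ≤ q 1 ∧ q 0 ≤ n - k)).card
        = (Q.filter (fun q => n - k + 1 ≤ q 1)).card := by
      clear hp h0 h1 split0
      have e1 : Q.filter (fun q => n - k + 1 ≤ q 1 ∧ n - k + 1 ≤ q 0)
          = (Q.filter (fun q => n - k + 1 ≤ q 1)).filter (fun q => n - k + 1 ≤ q 0) := by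
        rw [Finset.filter_filter]
      have e2 : Q.filter (fun q => n - k + 1 ≤ q 1 ∧ q 0 ≤ n - k)
          = (Q.filter (fun q => n - k + 1 ≤ q 1)).filter (fun q => ¬ n - k + 1 ≤ q 0) := by
        rw [Finset.filter_filter]
        apply Finset.filter_congr
        intro q _
        omega
      rw [e1, e2]
      exact Finset.card_filter_add_card_filter_not (fun q : Fin 2 → ℕ => n - k + 1 ≤ q 0)
    have ep : (Q.filter (fun q => n - k + 1 ≤ q 1 ∧ n - k + 1 ≤ q 0)).card = p := by
      rw [← hp]
      congr 1
      apply Finset.filter_congr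
      intro q _
      constructor
      · rintro ⟨ha, hb⟩ i; fin_cases i <;> assumption
      · intro h; exact ⟨h 1, h 0⟩
    have eA : Q.filter (fun q => ∀ i, q i ≤ n - k)
        = Q.filter (fun q => q 0 ≤ n - k ∧ q 1 ≤ n - k) := by
      apply Finset.filter_congr
      intro q _
      constructor
      · intro h; exact ⟨h 0, h 1⟩
      · rintro ⟨ha, hb⟩ i; fin_cases i <;> assumption
    have emix : (Q.filter (fun q => q 0 ≤ n - k ∧ n - k + 1 ≤ q 1))
        = (Q.filter (fun q => n - k + 1 ≤ q 1 ∧ q 0 ≤ n - k)) := by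
      apply Finset.filter_congr
      intro q _
      tauto
    rw [eA]
    rw [h0, emix] at split0
    rw [h1, ep] at split1
    -- split0 : A + C = n - k,  split1 : p + C = k
    generalize (Q.filter (fun q => q 0 ≤ n - k ∧ q 1 ≤ n - k)).card = A at split0 ⊢
    generalize (Q.filter (fun q => n - k + 1 ≤ q 1 ∧ q 0 ≤ n - k)).card = C at split0 split1
    clear hp h0 h1 ep eA emix hcard hcard' hpart Q
    omega
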